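/- Let 0 < δ ≤ 1/(2^8 · d² · L) and let x, y ∈ ℝ^d satisfy x = y − δ∇U(y) + √(2δ)·T(y). Then the matrix I − δ∇²U(y) + √(2δ)·DT(y) is invertible and |det(I − δ∇²U(y) + √(2δ)·DT(y))^{-1} − 1| ≤ 2·δ^{1/2}·d·L^{1/2}·(‖x‖₂² + 1). -/

import Mathlib

/-- The Hessian matrix of `U : ℝ^d → ℝ` at `x`. -/
noncomputable def hessMat {d : ℕ} (U : EuclideanSpace ℝ (Fin d) → ℝ)
    (x : EuclideanSpace ℝ (Fin d)) : Matrix (Fin d) (Fin d) ℝ :=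
  fun i j =>
    iteratedFDeriv ℝ 2 U x ![EuclideanSpace.single i 1, EuclideanSpace.single j 1]

/-- The Jacobian matrix of `T : ℝ^d → ℝ^d` at `x`. -/
noncomputable def jacMat {d : ℕ}
    (T : EuclideanSpace ℝ (Fin d) → EuclideanSpace ℝ (Fin d))
    (x : EuclideanSpace ℝ (Fin d)) : Matrix (Fin d) (Fin d) ℝ :=
  fun i j => fderiv ℝ T x (EuclideanSpace.single j 1) i

/-- The matrix with entries `M(x)_{i,j} = Σ_k (∂²T_i/∂x_j∂x_k)(x) · T_k(x)`. -/
noncomputable def secondDerivContraction {d : ℕ}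
    (T : EuclideanSpace ℝ (Fin d) → EuclideanSpace ℝ (Fin d))
    (x : EuclideanSpace ℝ (Fin d)) : Matrix (Fin d) (Fin d) ℝ :=
  fun i j => ∑ k, iteratedFDeriv ℝ 2 (fun z => T z i) x
      ![EuclideanSpace.single j 1, EuclideanSpace.single k 1] * T x k

lemma euclid_apply_sum {d : ℕ} {ι : Type*} (s : Finset ι)
    (f : ι → EuclideanSpace ℝ (Fin d)) (j : Fin d) :
    (∑ i ∈ s, f i) j = ∑ i ∈ s, f i j := by
  induction s using Finset.cons_induction with
  | empty => rfl
  | cons a s ha ih => rw [Finset.sum_cons, Finset.sum_cons, ← ih]; rfl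

lemma euclid_sum_single {d : ℕ} (v : EuclideanSpace ℝ (Fin d)) :
    ∑ i, v i • EuclideanSpace.single i (1:ℝ) = v := by
  ext j
  rw [euclid_apply_sum]
  simp [EuclideanSpace.single_apply]

open Matrix in
set_option maxHeartbeats 1000000 in
theorem stmt16 {d : ℕ} (hd : 0 < d) (U : EuclideanSpace ℝ (Fin d) → ℝ)
    (L : ℝ) (hL : 0 < L) (hU : ContDiff ℝ 3 U)
    (hgrad0 : gradient U 0 = 0)
    (hHess : ∀ z, ‖iteratedFDeriv ℝ 2 U z‖ ≤ L)
    (hD3U : ∀ z, ‖iteratedFDeriv ℝ 3 U z‖ ≤ L)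
    (T : EuclideanSpace ℝ (Fin d) → EuclideanSpace ℝ (Fin d))
    (hT : ContDiff ℝ 3 T)
    (hJsymm : ∀ z, (jacMat T z).IsSymm)
    (hT0 : ∀ z, ‖T z‖ ≤ Real.sqrt L * (‖z‖ + 1))
    (hT1 : ∀ z, ‖fderiv ℝ T z‖ ≤ Real.sqrt L)
    (hT2 : ∀ z, ‖iteratedFDeriv ℝ 2 T z‖ ≤ Real.sqrt L)
    (hT3 : ∀ z, ‖iteratedFDeriv ℝ 3 T z‖ ≤ Real.sqrt L)
    (δ : ℝ) (hδ0 : 0 < δ) (hδ : δ ≤ 1 / (2 ^ 8 * d ^ 2 * L))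
    (x y : EuclideanSpace ℝ (Fin d))
    (hxy : x = y - δ • gradient U y + Real.sqrt (2 * δ) • T y) :
    IsUnit (1 - δ • hessMat U y + Real.sqrt (2 * δ) • jacMat T y) ∧
      |((1 - δ • hessMat U y + Real.sqrt (2 * δ) • jacMat T y).det)⁻¹ - 1| ≤
        2 * Real.sqrt δ * (d : ℝ) * Real.sqrt L * (‖x‖ ^ 2 + 1) := by
  have hd1 : (1:ℝ) ≤ (d:ℝ) := by exact_mod_cast hd
  set b : ℝ := Real.sqrt (2 * δ) with hb
  have hb0 : 0 ≤ b := Real.sqrt_nonneg _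
  set Mm : Matrix (Fin d) (Fin d) ℝ := 1 - δ • hessMat U y + b • jacMat T y with hMm
  -- second derivative of U as a continuous bilinear map
  set D2 := fderiv ℝ (fderiv ℝ U) y with hD2
  have hD2symm : ∀ v w : EuclideanSpace ℝ (Fin d), D2 v w = D2 w v := by
    intro v w
    refine second_derivative_symmetric (f := U) (f' := fderiv ℝ U) (x := y)
      (fun z => ?_) ?_ v w
    · exact (hU.differentiable (by norm_num) z).hasFDerivAt
    · have : Differentiable ℝ (fderiv ℝ U) :=
        (hU.fderiv_right (m := 2) (by norm_num)).differentiable (by norm_num)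
      exact (this y).hasFDerivAt
  have hHapp : ∀ i j, hessMat U y i j =
      D2 (EuclideanSpace.single i 1) (EuclideanSpace.single j 1) := by
    intro i j
    rw [hessMat, iteratedFDeriv_two_apply]
    simp [hD2]
  -- bilinear identity for the Hessian matrix
  have hHbil : ∀ v w : EuclideanSpace ℝ (Fin d),
      v ⬝ᵥ (hessMat U y).mulVec w = D2 v w := by
    intro v w
    conv_rhs => rw [← euclid_sum_single v, ← euclid_sum_single w]
    simp only [map_sum, _root_.map_smul, ContinuousLinearMap.sum_apply,
      ContinuousLinearMap.smul_apply, smul_eq_mul, Finset.mul_sum]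
    simp only [dotProduct, Matrix.mulVec, hHapp, Finset.mul_sum]
    rw [Finset.sum_comm]
    refine Finset.sum_congr rfl fun i _ => Finset.sum_congr rfl fun j _ => ?_
    ring
  have hD2bd : ∀ v w : EuclideanSpace ℝ (Fin d), |D2 v w| ≤ L * ‖v‖ * ‖w‖ := by
    intro v w
    have h1 : D2 v w = iteratedFDeriv ℝ 2 U y ![v, w] := by
      rw [iteratedFDeriv_two_apply]; simp [hD2]
    rw [h1]
    calc |iteratedFDeriv ℝ 2 U y ![v, w]|
        ≤ ‖iteratedFDeriv ℝ 2 U y‖ * ∏ i, ‖![v, w] i‖ :=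
          (iteratedFDeriv ℝ 2 U y).le_opNorm _
      _ ≤ L * ‖v‖ * ‖w‖ := by
          rw [Fin.prod_univ_two]
          simp only [Matrix.cons_val_zero, Matrix.cons_val_one, Matrix.head_cons]
          rw [mul_assoc]
          exact mul_le_mul_of_nonneg_right (hHess y) (by positivity)
  -- bilinear identity for the Jacobian matrix
  have hJbil : ∀ v w : EuclideanSpace ℝ (Fin d),
      v ⬝ᵥ (jacMat T y).mulVec w = (inner ℝ v (fderiv ℝ T y w) : ℝ) := by
    intro v w
    have h1 : ∀ i, fderiv ℝ T y w i
        = ∑ j, w j * (fderiv ℝ T y (EuclideanSpace.single j 1)) i := by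
      intro i
      conv_lhs => rw [← euclid_sum_single w]
      rw [map_sum, euclid_apply_sum]
      refine Finset.sum_congr rfl fun j _ => ?_
      rw [_root_.map_smul]
      simp
    simp only [PiLp.inner_apply, RCLike.inner_apply, starRingEnd_apply, star_trivial, h1]
    simp only [dotProduct, Matrix.mulVec, jacMat, Finset.mul_sum]
    refine Finset.sum_congr rfl fun i _ => ?_
    rw [Finset.sum_mul]
    refine Finset.sum_congr rfl fun j _ => ?_
    ring
  have hJbd : ∀ v w : EuclideanSpace ℝ (Fin d),
      |(inner ℝ v (fderiv ℝ T y w) : ℝ)| ≤ Real.sqrt L * ‖v‖ * ‖w‖ := by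
    intro v w
    calc |(inner ℝ v (fderiv ℝ T y w) : ℝ)| ≤ ‖v‖ * ‖fderiv ℝ T y w‖ :=
          abs_real_inner_le_norm _ _
      _ ≤ ‖v‖ * (Real.sqrt L * ‖w‖) := by
          refine mul_le_mul_of_nonneg_left ?_ (norm_nonneg _)
          exact le_trans ((fderiv ℝ T y).le_opNorm w)
            (mul_le_mul_of_nonneg_right (hT1 y) (norm_nonneg _))
      _ = Real.sqrt L * ‖v‖ * ‖w‖ := by ring
  -- M is Hermitian
  have hHsymm : (hessMat U y).IsSymm := by
    rw [Matrix.IsSymm]; ext i j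
    rw [Matrix.transpose_apply, hHapp, hHapp, hD2symm]
  have hMher : Mm.IsHermitian := by
    have hsym : Mm.IsSymm :=
      (Matrix.isSymm_one.sub (hHsymm.smul δ)).add ((hJsymm y).smul b)
    rw [Matrix.IsHermitian]
    ext i j
    rw [Matrix.conjTranspose_apply, star_trivial]
    exact hsym.apply i j
  set μ := hMher.eigenvalues with hmu
  set a : ℝ := δ * L + b * Real.sqrt L with ha
  have haL0 : 0 ≤ Real.sqrt L := Real.sqrt_nonneg _
  have ha0 : 0 ≤ a := by positivity
  -- eigenvalue bounds
  have hμbd : ∀ i, |μ i - 1| ≤ a := by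
    intro i
    set v : EuclideanSpace ℝ (Fin d) := hMher.eigenvectorBasis i with hv
    have hv1 : ‖v‖ = 1 := hMher.eigenvectorBasis.orthonormal.1 i
    have hvv : v ⬝ᵥ v = 1 := by
      have h1 : ((inner ℝ v v : ℝ)) = 1 := by
        rw [real_inner_self_eq_norm_sq, hv1]; norm_num
      rw [← h1]
      simp [PiLp.inner_apply, dotProduct]
      rw [EuclideanSpace.norm_eq, Real.sq_sqrt (by positivity)]
      simp [sq]
    have hμeq : v ⬝ᵥ (Mm.mulVec v) = μ i := by
      rw [show Mm.mulVec v = Mm *ᵥ ⇑(hMher.eigenvectorBasis i) from rfl,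
        hMher.mulVec_eigenvectorBasis]
      rw [dotProduct_smul]
      rw [show ⇑(hMher.eigenvectorBasis i) = v from rfl, hvv]
      simp
      rfl
    have hexp : v ⬝ᵥ (Mm.mulVec v)
        = 1 - δ * D2 v v + b * (inner ℝ v (fderiv ℝ T y v) : ℝ) := by
      rw [hMm, Matrix.add_mulVec, Matrix.sub_mulVec, Matrix.smul_mulVec,
        Matrix.smul_mulVec, Matrix.one_mulVec, dotProduct_add,
        dotProduct_sub, dotProduct_smul, dotProduct_smul,
        hvv, hHbil, hJbil]
      simp
    have h1 : μ i - 1 = -(δ * D2 v v) + b * (inner ℝ v (fderiv ℝ T y v) : ℝ) := by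
      rw [← hμeq, hexp]; ring
    rw [h1]
    have h2 := hD2bd v v
    have h3 := hJbd v v
    rw [hv1] at h2 h3
    calc |-(δ * D2 v v) + b * (inner ℝ v (fderiv ℝ T y v) : ℝ)|
        ≤ |δ * D2 v v| + |b * (inner ℝ v (fderiv ℝ T y v) : ℝ)| := by
          exact (abs_add_le _ _).trans (by rw [abs_neg])
      _ ≤ δ * L + b * Real.sqrt L := by
          rw [abs_mul, abs_mul, abs_of_pos hδ0, abs_of_nonneg hb0]
          have := abs_nonneg (D2 v v)
          nlinarith
  -- arithmetic bounds
  set s : ℝ := Real.sqrt δ * Real.sqrt L with hsdef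
  have hs0 : 0 ≤ s := by positivity
  have hds : (d:ℝ) * s ≤ 1/16 := by
    have hdpos : (0:ℝ) < d := by exact_mod_cast hd
    have h1 : δ * L ≤ 1 / (2^8 * d^2) := by
      have h2 := mul_le_mul_of_nonneg_right hδ hL.le
      have h3 : 1 / (2^8 * (d:ℝ)^2 * L) * L = 1 / (2^8 * d^2) := by
        field_simp
      linarith [h3 ▸ h2]
    have h4 : s = Real.sqrt (δ * L) := (Real.sqrt_mul hδ0.le L).symm
    have h5 : Real.sqrt (δ * L) ≤ 1 / (16 * d) := by
      rw [show (1:ℝ) / (16 * d) = Real.sqrt ((1 / (16 * d))^2) from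
        (Real.sqrt_sq (by positivity)).symm]
      apply Real.sqrt_le_sqrt
      rw [show ((1:ℝ) / (16 * d))^2 = 1 / (2^8 * d^2) by field_simp; ring]
      exact h1
    calc (d:ℝ) * s = (d:ℝ) * Real.sqrt (δ * L) := by rw [h4]
      _ ≤ (d:ℝ) * (1 / (16 * d)) := mul_le_mul_of_nonneg_left h5 hdpos.le
      _ = 1/16 := by field_simp
  have hs16 : s ≤ 1/16 := le_trans (le_mul_of_one_le_left hs0 hd1) hds
  have hsqrt2 : Real.sqrt 2 ≤ 23/16 := by
    nlinarith [Real.sq_sqrt (show (0:ℝ) ≤ 2 by norm_num), Real.sqrt_nonneg 2]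
  have hb2 : b = Real.sqrt 2 * Real.sqrt δ := Real.sqrt_mul (by norm_num) δ
  have hdL : δ * L = s * s := by
    have h12 : s * s = δ * L := by
      rw [hsdef, mul_mul_mul_comm, Real.mul_self_sqrt hδ0.le, Real.mul_self_sqrt hL.le]
    linarith
  have has : a ≤ (3/2) * s := by
    rw [ha, hdL, hb2]
    have h6 : Real.sqrt 2 * Real.sqrt δ * Real.sqrt L = Real.sqrt 2 * s := by
      rw [hsdef]; ring
    rw [h6]
    nlinarith [Real.sqrt_nonneg δ]
  set Dd : ℝ := (d:ℝ) * a with hDd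
  have hDd0 : 0 ≤ Dd := by positivity
  have hDdbd : Dd ≤ 3/32 := by
    have : Dd ≤ (d:ℝ) * ((3/2) * s) := mul_le_mul_of_nonneg_left has (by positivity)
    nlinarith
  have ha132 : a ≤ 3/32 := le_trans (le_mul_of_one_le_left ha0 hd1) hDdbd
  -- determinant bounds
  have hdet : Mm.det = ∏ i, μ i := by
    simpa using hMher.det_eq_prod_eigenvalues
  have hμlow : ∀ i, 1 - a ≤ μ i := fun i => by
    have := abs_le.mp (hμbd i); linarith [this.1]
  have hμhigh : ∀ i, μ i ≤ 1 + a := fun i => by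
    have := abs_le.mp (hμbd i); linarith [this.2]
  have h1a : (0:ℝ) < 1 - a := by linarith
  have hPl : (1 - a)^d ≤ Mm.det := by
    rw [hdet]
    calc (1 - a)^d = ∏ _i : Fin d, (1 - a) := by
          rw [Finset.prod_const, Finset.card_univ, Fintype.card_fin]
      _ ≤ ∏ i, μ i := Finset.prod_le_prod (fun i _ => h1a.le) (fun i _ => hμlow i)
  have hPu : Mm.det ≤ ((1 - a)^d)⁻¹ := by
    have h7 : Mm.det ≤ (1 + a)^d := by
      rw [hdet]
      calc ∏ i, μ i ≤ ∏ _i : Fin d, (1 + a) :=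
            Finset.prod_le_prod (fun i _ => le_trans h1a.le (hμlow i))
              (fun i _ => hμhigh i)
        _ = (1 + a)^d := by rw [Finset.prod_const, Finset.card_univ, Fintype.card_fin]
    have h8 : (1 + a)^d * (1 - a)^d ≤ 1 := by
      rw [← mul_pow]
      have h9 : (1 + a) * (1 - a) = 1 - a^2 := by ring
      rw [h9]
      have ha1' : a ≤ 1 := by linarith
      have hsq : a^2 ≤ 1 := pow_le_one₀ ha0 ha1'
      have hsq0 : 0 ≤ a^2 := sq_nonneg a
      have hle1 : (0:ℝ) ≤ 1 - a^2 := by linarith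
      have hle2 : 1 - a^2 ≤ (1:ℝ) := by linarith
      exact pow_le_one₀ hle1 hle2
    have h10 : (0:ℝ) < (1 - a)^d := pow_pos h1a d
    calc Mm.det ≤ (1 + a)^d := h7
      _ ≤ ((1 - a)^d)⁻¹ := by
          rw [inv_eq_one_div, le_div_iff₀ h10]
          exact h8
  -- Bernoulli lower bound
  have hBern : 1 - Dd ≤ (1 - a)^d := by
    calc 1 - Dd = 1 + (d:ℝ) * (-a) := by rw [hDd]; ring
      _ ≤ (1 + -a)^d := one_add_mul_le_pow (by linarith) d
      _ = (1 - a)^d := by ring_nf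
  have h1D : (0:ℝ) < 1 - Dd := by linarith
  have hdetlow : 1 - Dd ≤ Mm.det := le_trans hBern hPl
  have hdetup : Mm.det ≤ (1 - Dd)⁻¹ := by
    refine le_trans hPu ?_
    gcongr
  have hP0 : (0:ℝ) < Mm.det := lt_of_lt_of_le h1D hdetlow
  constructor
  · exact (Matrix.isUnit_iff_isUnit_det Mm).mpr (isUnit_iff_ne_zero.mpr hP0.ne')
  · have hinvup : (Mm.det)⁻¹ ≤ (1 - Dd)⁻¹ := by gcongr
    have hinvlow : 1 - Dd ≤ (Mm.det)⁻¹ := by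
      calc 1 - Dd = ((1 - Dd)⁻¹)⁻¹ := (inv_inv _).symm
        _ ≤ (Mm.det)⁻¹ := by gcongr
    have hkey : (1 - Dd)⁻¹ ≤ 1 + (32/29) * Dd := by
      rw [inv_eq_one_div, div_le_iff₀ h1D]
      have hDsq : Dd * Dd ≤ Dd * (3/32) := mul_le_mul_of_nonneg_left hDdbd hDd0
      linarith [hDsq]
    have hfin1 : (32/29) * Dd ≤ 2 * ((d:ℝ) * s) := by
      have h11 : Dd ≤ (d:ℝ) * ((3/2) * s) := mul_le_mul_of_nonneg_left has (by positivity)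
      linarith [h11, mul_nonneg (show (0:ℝ) ≤ (d:ℝ) by positivity) hs0]
    have hRs : 2 * ((d:ℝ) * s) = 2 * Real.sqrt δ * (d:ℝ) * Real.sqrt L := by
      rw [hsdef]; ring
    have hRHS : 2 * Real.sqrt δ * (d:ℝ) * Real.sqrt L
        ≤ 2 * Real.sqrt δ * (d:ℝ) * Real.sqrt L * (‖x‖^2 + 1) := by
      have hR0 : (0:ℝ) ≤ 2 * Real.sqrt δ * (d:ℝ) * Real.sqrt L := by positivity
      linarith [mul_nonneg hR0 (sq_nonneg ‖x‖)]
    have hchain : (32/29) * Dd ≤ 2 * Real.sqrt δ * (d:ℝ) * Real.sqrt L * (‖x‖^2 + 1) := by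
      rw [← hRs] at hRHS ⊢
      linarith
    rw [abs_le]
    constructor
    · have : -((32/29) * Dd) ≤ (Mm.det)⁻¹ - 1 := by
        have : Dd ≤ (32/29) * Dd := by linarith
        linarith
      linarith
    · linarith
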